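/- Let F be a field, q ∈ F nonzero and not a root of unity, and d ≥ 1. Let T_q ∈ Mat_{d+1}(F) be the lower triangular matrix with (i,j)-entry (-1)^j q^{j(1-i)} [i choose j]_q for 0 ≤ j ≤ i ≤ d (and 0 otherwise), where [i choose j]_q denotes the Gaussian q-binomial coefficient defined via [n]_q = (q^n - q^{-n})/(q - q^{-1}). Then T_q * T_{q⁻¹} = I, i.e., the inverse of T_q is T_{q⁻¹}. -/

import Mathlib

/-- The symmetric q-integer `[n]_q = (q^n - q^{-n})/(q - q⁻¹)`. -/
def qInt {F : Type*} [Field F] (q : F) (n : ℕ) : F :=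
  (q ^ n - q⁻¹ ^ n) / (q - q⁻¹)

/-- The q-factorial `[n]!_q`. -/
def qFact {F : Type*} [Field F] (q : F) : ℕ → F
  | 0 => 1
  | n + 1 => qInt q (n + 1) * qFact q n

/-- The Gaussian q-binomial coefficient `[n choose i]_q`. -/
def qBinom {F : Type*} [Field F] (q : F) (n i : ℕ) : F :=
  qFact q n / (qFact q i * qFact q (n - i))

/-- The lower triangular matrix `T_q` with `(i,j)`-entry
`(-1)^j q^{j(1-i)} [i choose j]_q` for `j ≤ i`. -/
def Tmat {F : Type*} [Field F] (d : ℕ) (q : F) :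
    Matrix (Fin (d + 1)) (Fin (d + 1)) F :=
  Matrix.of fun i j =>
    if (j : ℕ) ≤ (i : ℕ) then
      (-1) ^ (j : ℕ) * q ^ (((j : ℕ) : ℤ) * (1 - ((i : ℕ) : ℤ))) * qBinom q (i : ℕ) (j : ℕ)
    else 0

/-- The key alternating sum `S(n) = Σ_{m=0}^n (-1)^m q^{m(1-n)} [n choose m]_q`. -/
def Ssum {F : Type*} [Field F] (q : F) (n : ℕ) : F :=
  ∑ m ∈ Finset.range (n + 1), (-1 : F) ^ m * q ^ m * (q⁻¹) ^ (m * n) * qBinom q n m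

section Aux

variable {F : Type*} [Field F] (q : F)

lemma qInt_inv (n : ℕ) : qInt q⁻¹ n = qInt q n := by
  unfold qInt
  rw [inv_inv, show q⁻¹ ^ n - q ^ n = -(q ^ n - q⁻¹ ^ n) by ring,
    show q⁻¹ - q = -(q - q⁻¹) by ring, neg_div_neg_eq]

lemma qFact_inv (n : ℕ) : qFact q⁻¹ n = qFact q n := by
  induction n with
  | zero => rfl
  | succ n ih => rw [qFact, qFact, qInt_inv, ih]

lemma qBinom_inv (n i : ℕ) : qBinom q⁻¹ n i = qBinom q n i := by
  unfold qBinom; rw [qFact_inv, qFact_inv, qFact_inv]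

variable (hq : q ≠ 0) (hroot : ∀ n : ℕ, 0 < n → q ^ n ≠ 1)
include hq hroot

lemma qsub_ne : q - q⁻¹ ≠ 0 := by
  intro h
  apply hroot 2 two_pos
  have : q = q⁻¹ := sub_eq_zero.mp h
  calc q ^ 2 = q * q := sq q
  _ = q * q⁻¹ := by rw [← this]
  _ = 1 := mul_inv_cancel₀ hq

lemma qInt_ne {n : ℕ} (hn : 0 < n) : qInt q n ≠ 0 := by
  unfold qInt
  apply div_ne_zero _ (qsub_ne q hq hroot)
  intro h
  apply hroot (2 * n) (by positivity)
  have h1 : q ^ n = q⁻¹ ^ n := sub_eq_zero.mp h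
  have : q ^ n * q ^ n = 1 := by
    nth_rewrite 2 [h1]
    rw [← mul_pow, mul_inv_cancel₀ hq, one_pow]
  rw [two_mul, pow_add, this]

lemma qFact_ne (n : ℕ) : qFact q n ≠ 0 := by
  induction n with
  | zero => exact one_ne_zero
  | succ n ih => exact mul_ne_zero (qInt_ne q hq hroot n.succ_pos) ih

lemma qBinom_zero (n : ℕ) : qBinom q n 0 = 1 := by
  unfold qBinom
  rw [show qFact q 0 = 1 from rfl, Nat.sub_zero, one_mul,
    div_self (qFact_ne q hq hroot n)]

lemma qBinom_self (n : ℕ) : qBinom q n n = 1 := by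
  unfold qBinom
  rw [Nat.sub_self, show qFact q 0 = 1 from rfl, mul_one,
    div_self (qFact_ne q hq hroot n)]

lemma qBinom_mul (k m n : ℕ) (h : m ≤ n) :
    qBinom q (k + n) (k + m) * qBinom q (k + m) k = qBinom q (k + n) k * qBinom q n m := by
  unfold qBinom
  rw [show k + n - (k + m) = n - m by omega, show k + m - k = m by omega,
    show k + n - k = n by omega]
  have h1 := qFact_ne q hq hroot
  field_simp
  rw [div_eq_div_iff (by simp [h1]) (by simp [h1])]
  ring

lemma qInt_add (m t : ℕ) :
    qInt q (m + t + 1) = q ^ (m + 1) * qInt q t + q⁻¹ ^ t * qInt q (m + 1) := by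
  have hd := qsub_ne q hq hroot
  unfold qInt
  rw [← mul_div_assoc, ← mul_div_assoc, ← add_div]
  congr 1
  ring

lemma qPascal (m t : ℕ) :
    qBinom q (m + t + 2) (m + 1)
      = q⁻¹ ^ (t + 1) * qBinom q (m + t + 1) m + q ^ (m + 1) * qBinom q (m + t + 1) (m + 1) := by
  have key := qInt_add q hq hroot m (t + 1)
  unfold qBinom
  rw [show m + t + 2 - (m + 1) = t + 1 by omega, show m + t + 1 - m = t + 1 by omega,
    show m + t + 1 - (m + 1) = t by omega,
    show qFact q (m + t + 2) = qInt q (m + t + 2) * qFact q (m + t + 1) from rfl,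
    show qFact q (m + 1) = qInt q (m + 1) * qFact q m from rfl,
    show qFact q (t + 1) = qInt q (t + 1) * qFact q t from rfl,
    show qInt q (m + t + 2) = qInt q (m + (t + 1) + 1) from rfl, key]
  have h1 := qFact_ne q hq hroot
  have h2 : qInt q (m + 1) ≠ 0 := qInt_ne q hq hroot m.succ_pos
  have h3 : qInt q (t + 1) ≠ 0 := qInt_ne q hq hroot t.succ_pos
  rw [← mul_div_assoc, ← mul_div_assoc,
      div_add_div _ _ (mul_ne_zero (h1 m) (mul_ne_zero h3 (h1 t)))
        (mul_ne_zero (mul_ne_zero h2 (h1 m)) (h1 t)),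
      div_eq_div_iff (mul_ne_zero (mul_ne_zero h2 (h1 m)) (mul_ne_zero h3 (h1 t)))
        (mul_ne_zero (mul_ne_zero (h1 m) (mul_ne_zero h3 (h1 t)))
          (mul_ne_zero (mul_ne_zero h2 (h1 m)) (h1 t)))]
  ring

lemma Ssum_succ (n : ℕ) : Ssum q (n + 1) = (1 - q⁻¹ ^ (2 * n)) * Ssum q n := by
  conv_lhs => rw [Ssum]
  rw [Finset.sum_range_succ, Finset.sum_range_succ']
  have hterm : ∀ m ∈ Finset.range n,
      (-1 : F) ^ (m + 1) * q ^ (m + 1) * q⁻¹ ^ ((m + 1) * (n + 1)) * qBinom q (n + 1) (m + 1)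
      = ((-1 : F) ^ (m + 1) * q ^ (m + 1) * q⁻¹ ^ ((m + 1) * n) * qBinom q n (m + 1))
        - q⁻¹ ^ (2 * n) * ((-1 : F) ^ m * q ^ m * q⁻¹ ^ (m * n) * qBinom q n m) := by
    intro m hm
    rw [Finset.mem_range] at hm
    obtain ⟨t, rfl⟩ : ∃ t, n = m + t + 1 := ⟨n - m - 1, by omega⟩
    rw [show m + t + 1 + 1 = m + t + 2 from rfl, qPascal q hq hroot m t]
    simp only [inv_pow]
    field_simp
    ring
  rw [Finset.sum_congr rfl hterm, Finset.sum_sub_distrib, ← Finset.mul_sum]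
  have h1 : ∑ m ∈ Finset.range n,
      (-1 : F) ^ (m + 1) * q ^ (m + 1) * q⁻¹ ^ ((m + 1) * n) * qBinom q n (m + 1)
      = Ssum q n - 1 := by
    rw [Ssum, Finset.sum_range_succ']
    simp [qBinom_zero q hq hroot]
  have h2 : ∑ m ∈ Finset.range n,
      (-1 : F) ^ m * q ^ m * q⁻¹ ^ (m * n) * qBinom q n m
      = Ssum q n - (-1 : F) ^ n * q ^ n * q⁻¹ ^ (n * n) := by
    rw [Ssum, Finset.sum_range_succ, qBinom_self q hq hroot]
    ring
  rw [h1, h2, qBinom_self q hq hroot, qBinom_zero q hq hroot]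
  have key : (-1 : F) ^ (n + 1) * q ^ (n + 1) * q⁻¹ ^ ((n + 1) * (n + 1))
      = - (q⁻¹ ^ (2 * n) * ((-1 : F) ^ n * q ^ n * q⁻¹ ^ (n * n))) := by
    simp only [inv_pow]
    field_simp
    ring
  rw [key]
  ring

lemma Ssum_pos {n : ℕ} (hn : 0 < n) : Ssum q n = 0 := by
  induction n with
  | zero => omega
  | succ n ih =>
    rcases Nat.eq_zero_or_pos n with h | h
    · subst h
      rw [Ssum]
      simp [Finset.sum_range_succ, qBinom_zero q hq hroot, qBinom_self q hq hroot]
      field_simp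
      norm_num
    · rw [Ssum_succ q hq hroot n, ih h, mul_zero]

lemma Ssum_zero : Ssum q 0 = 1 := by
  simp [Ssum, qBinom_zero q hq hroot]

omit hroot in
lemma pow_helper (a b c d : ℕ) (h : a + d = c + b) :
    q ^ a * q⁻¹ ^ b = q ^ c * q⁻¹ ^ d := by
  rw [inv_pow, inv_pow, mul_comm, mul_comm (q ^ c), inv_mul_eq_div, inv_mul_eq_div,
    div_eq_div_iff (pow_ne_zero b hq) (pow_ne_zero d hq), ← pow_add, ← pow_add, h]

omit hroot in
lemma Tmat_apply (d : ℕ) (i j : Fin (d + 1)) :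
    Tmat d q i j = if (j : ℕ) ≤ (i : ℕ) then
      (-1 : F) ^ (j : ℕ) * q ^ (j : ℕ) * q⁻¹ ^ ((j : ℕ) * (i : ℕ)) * qBinom q (i : ℕ) (j : ℕ)
    else 0 := by
  simp only [Tmat, Matrix.of_apply]
  by_cases h : (j : ℕ) ≤ (i : ℕ)
  · rw [if_pos h, if_pos h,
      show q ^ (((j : ℕ) : ℤ) * (1 - ((i : ℕ) : ℤ)))
          = q ^ (j : ℕ) * q⁻¹ ^ ((j : ℕ) * (i : ℕ)) from ?_]
    · ring
    · rw [show ((j : ℕ) : ℤ) * (1 - ((i : ℕ) : ℤ))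
          = ((j : ℕ) : ℤ) - (((j : ℕ) * (i : ℕ) : ℕ) : ℤ) by push_cast; ring,
        zpow_sub₀ hq, zpow_natCast, zpow_natCast, div_eq_mul_inv, inv_pow]
  · rw [if_neg h, if_neg h]

end Aux

theorem stmt_7 {F : Type*} [Field F] (d : ℕ) (hd : 1 ≤ d) (q : F) (hq : q ≠ 0)
    (hroot : ∀ n : ℕ, 0 < n → q ^ n ≠ 1) :
    Tmat d q * Tmat d q⁻¹ = 1 := by
  have hq' : q⁻¹ ≠ 0 := inv_ne_zero hq
  ext i k
  rw [Matrix.mul_apply, Matrix.one_apply]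
  obtain ⟨f, hfdef⟩ : ∃ f : ℕ → F, f = fun j =>
      (if j ≤ (i : ℕ) then
        (-1 : F) ^ j * q ^ j * q⁻¹ ^ (j * (i : ℕ)) * qBinom q (i : ℕ) j else 0)
      * (if (k : ℕ) ≤ j then
        (-1 : F) ^ (k : ℕ) * q⁻¹ ^ (k : ℕ) * q ^ ((k : ℕ) * j) * qBinom q j (k : ℕ) else 0) :=
    ⟨_, rfl⟩
  have hsum : ∑ j : Fin (d + 1), Tmat d q i j * Tmat d q⁻¹ j k
      = ∑ j ∈ Finset.range (d + 1), f j := by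
    rw [← Fin.sum_univ_eq_sum_range f (d + 1)]
    refine Finset.sum_congr rfl fun j _ => ?_
    rw [Tmat_apply q hq d i j, Tmat_apply q⁻¹ hq' d j k, hfdef]
    simp only [inv_inv, qBinom_inv]
  rw [hsum]
  by_cases hik : (k : ℕ) ≤ (i : ℕ)
  · obtain ⟨n, hn⟩ : ∃ n, (i : ℕ) = (k : ℕ) + n := ⟨(i : ℕ) - (k : ℕ), by omega⟩
    have hstep1 : ∑ j ∈ Finset.range (d + 1), f j
        = ∑ j ∈ Finset.Icc (k : ℕ) (i : ℕ), f j := by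
      refine (Finset.sum_subset ?_ ?_).symm
      · intro x hx
        rw [Finset.mem_Icc] at hx
        rw [Finset.mem_range]
        exact lt_of_le_of_lt hx.2 i.isLt
      · intro x hx hnx
        rw [Finset.mem_range] at hx
        rw [Finset.mem_Icc] at hnx
        push_neg at hnx
        rw [hfdef]
        dsimp only
        by_cases h2 : (k : ℕ) ≤ x
        · rw [if_neg (by have := hnx h2; omega), zero_mul]
        · rw [if_neg h2, mul_zero]
    have hstep2 : ∑ m ∈ Finset.range (n + 1), f ((k : ℕ) + m)
        = q⁻¹ ^ ((k : ℕ) * n) * qBinom q ((k : ℕ) + n) (k : ℕ) * Ssum q n := by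
      rw [Ssum, Finset.mul_sum]
      refine Finset.sum_congr rfl fun m hm => ?_
      rw [Finset.mem_range] at hm
      have hmn : m ≤ n := by omega
      rw [hfdef]
      dsimp only
      rw [if_pos (by omega), if_pos (by omega), hn]
      have hs : (-1 : F) ^ ((k : ℕ) + m) * (-1 : F) ^ (k : ℕ) = (-1 : F) ^ m := by
        rw [pow_add, mul_comm ((-1 : F) ^ (k : ℕ)) ((-1 : F) ^ m), mul_assoc, ← mul_pow]
        norm_num
      have hb := qBinom_mul q hq hroot (k : ℕ) m n hmn
      have hp := pow_helper q hq (((k : ℕ) + m) + (k : ℕ) * ((k : ℕ) + m))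
        (((k : ℕ) + m) * ((k : ℕ) + n) + (k : ℕ)) m ((k : ℕ) * n + m * n) (by ring)
      trans (((-1 : F) ^ ((k : ℕ) + m) * (-1 : F) ^ (k : ℕ))
        * (q ^ (((k : ℕ) + m) + (k : ℕ) * ((k : ℕ) + m))
          * q⁻¹ ^ (((k : ℕ) + m) * ((k : ℕ) + n) + (k : ℕ)))
        * (qBinom q ((k : ℕ) + n) ((k : ℕ) + m) * qBinom q ((k : ℕ) + m) (k : ℕ)))
      · ring
      · rw [hs, hp, hb]
        ring
    rw [hstep1, ← Finset.Ico_add_one_right_eq_Icc, Finset.sum_Ico_eq_sum_range,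
      show (i : ℕ) + 1 - (k : ℕ) = n + 1 by omega, hstep2]
    rcases Nat.eq_zero_or_pos n with h0 | h0
    · subst h0
      rw [if_pos (Fin.ext (by omega)), Ssum_zero q hq hroot]
      simp [qBinom_self q hq hroot]
    · rw [if_neg (fun h => by have := congrArg Fin.val h; omega),
        Ssum_pos q hq hroot h0, mul_zero]
  · rw [if_neg (fun h => hik (le_of_eq (congrArg Fin.val h.symm)))]
    apply Finset.sum_eq_zero
    intro j hj
    rw [hfdef]
    dsimp only
    by_cases h1 : j ≤ (i : ℕ)
    · rw [if_neg (show ¬(k : ℕ) ≤ j by omega), mul_zero]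
    · rw [if_neg h1, zero_mul]
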